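/- Let ρ1 ∈ D_{n1} and ρ2 ∈ D_{n2} be density matrices with eigenvalues a_1 ≥ a_2 ≥ ... ≥ a_{n1} and b_1 ≥ b_2 ≥ ... ≥ b_{n2} arranged in descending order. Then for every σ ∈ S(ρ1,ρ2), the largest eigenvalue of σ (equivalently, its operator/spectral norm) satisfies ‖σ‖_2 ≤ Σ_{i=1}^{min(n1,n2)} min{a_i, b_i}. -/

import Mathlib

open Matrix Finset
open scoped ComplexOrder
open Module
open scoped InnerProductSpace

/-- Partial trace over the first subsystem: `tr_1(ρ) = Σ_j ρ_{jj} ∈ M_{n2}`. -/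
noncomputable def trace1 {n1 n2 : ℕ} (ρ : Matrix (Fin n1 × Fin n2) (Fin n1 × Fin n2) ℂ) :
    Matrix (Fin n2) (Fin n2) ℂ :=
  Matrix.of fun i j => ∑ k : Fin n1, ρ (k, i) (k, j)

/-- Partial trace over the second subsystem: `tr_2(ρ) = (tr ρ_{ij})_{ij} ∈ M_{n1}`. -/
noncomputable def trace2 {n1 n2 : ℕ} (ρ : Matrix (Fin n1 × Fin n2) (Fin n1 × Fin n2) ℂ) :
    Matrix (Fin n1) (Fin n1) ℂ :=
  Matrix.of fun i j => ∑ k : Fin n2, ρ (i, k) (j, k)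

section helpers

private lemma card_key {τ : Type*} [Fintype τ] (p : τ → ℝ) (r : ℝ) :
    Fintype.card {i // p i = r} = Multiset.card (Multiset.filter (fun a => r = p a)
      (Finset.univ.val)) := by
  classical
  rw [Fintype.card_subtype]
  rw [show Finset.filter (fun x => p x = r) Finset.univ
      = Finset.filter (fun x => r = p x) Finset.univ from
    Finset.filter_congr (fun x _ => by rw [eq_comm])]
  rfl

private lemma exists_comp_equiv {ι κ : Type*} [Fintype ι] [Fintype κ]
    {f : ι → ℝ} {g : κ → ℝ}
    (h : (Finset.univ.val.map f : Multiset ℝ) = Finset.univ.val.map g) :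
    ∃ e : ι ≃ κ, f = g ∘ e := by
  classical
  have hcard : ∀ r : ℝ, Fintype.card {i // f i = r} = Fintype.card {j // g j = r} := by
    intro r
    have h2 := congrArg (Multiset.count r) h
    rw [Multiset.count_map, Multiset.count_map] at h2
    rw [card_key f r, card_key g r, h2]
  refine ⟨Equiv.ofFiberEquiv (fun r => Fintype.equivOfCardEq (hcard r)),
    funext fun i => (Equiv.ofFiberEquiv_map _ i).symm⟩

private lemma exists_antitone_comp {n : ℕ} (f : Fin n → ℝ) :
    ∃ e : Equiv.Perm (Fin n), Antitone (f ∘ e) := by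
  refine ⟨Tuple.sort (fun i => -f i), fun i j hij => ?_⟩
  have := Tuple.monotone_sort (fun i => -f i) hij
  simpa using this

private lemma card_le_fin {m : ℕ} (i : Fin m) :
    Fintype.card {j : Fin m // j ≤ i} = i.1 + 1 := by
  have e : {j : Fin m // j ≤ i} ≃ Fin (i.1 + 1) :=
    { toFun := fun j => ⟨j.1.1, by have := Fin.le_def.mp j.2; omega⟩
      invFun := fun k => ⟨⟨k.1, by have := k.2; have := i.2; omega⟩, by
        rw [Fin.le_def]; simp; omega⟩
      left_inv := fun j => rfl
      right_inv := fun k => rfl }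
  rw [Fintype.card_congr e, Fintype.card_fin]

private lemma card_ge_fin {m : ℕ} (i : Fin m) :
    Fintype.card {j : Fin m // i ≤ j} = m - i.1 := by
  have e : {j : Fin m // i ≤ j} ≃ Fin (m - i.1) :=
    { toFun := fun j => ⟨j.1.1 - i.1, by
        have h1 := Fin.le_def.mp j.2; have := j.1.2; omega⟩
      invFun := fun k => ⟨⟨k.1 + i.1, by have := k.2; omega⟩, by
        rw [Fin.le_def]; simp⟩
      left_inv := fun j => Subtype.ext (Fin.ext (by
        have h1 := Fin.le_def.mp j.2; simp; omega))
      right_inv := fun k => Fin.ext (by simp) }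
  rw [Fintype.card_congr e, Fintype.card_fin]

private lemma card_lt_fin {m : ℕ} (i : Fin m) :
    Fintype.card {j : Fin m // j < i} = i.1 := by
  have e : {j : Fin m // j < i} ≃ Fin i.1 :=
    { toFun := fun j => ⟨j.1.1, Fin.lt_def.mp j.2⟩
      invFun := fun k => ⟨⟨k.1, by have := k.2; have := i.2; omega⟩, by
        rw [Fin.lt_def]; simp⟩
      left_inv := fun j => rfl
      right_inv := fun k => rfl }
  rw [Fintype.card_congr e, Fintype.card_fin]

variable {m : ℕ}

/-- coefficient identity: if `u` is an eigenbasis for `M` with eigenvalues `γ`, the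
coordinates of `M x` are `γ j * (coords of x)`. -/
private lemma repr_eigen {M : Matrix (Fin m) (Fin m) ℂ}
    {u : OrthonormalBasis (Fin m) ℂ (EuclideanSpace ℂ (Fin m))} {γ : Fin m → ℝ}
    (hu : ∀ j, Matrix.toEuclideanLin M (u j) = (γ j : ℂ) • u j)
    (x : EuclideanSpace ℂ (Fin m)) (j : Fin m) :
    u.repr (Matrix.toEuclideanLin M x) j = (γ j : ℂ) * u.repr x j := by
  have hx : Matrix.toEuclideanLin M x = ∑ k, (u.repr x k * (γ k : ℂ)) • u k := by
    conv_lhs => rw [← u.sum_repr x]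
    rw [map_sum]
    refine Finset.sum_congr rfl fun k _ => ?_
    rw [_root_.map_smul, hu k, smul_smul]
  rw [OrthonormalBasis.repr_apply_apply, hx, inner_sum]
  simp only [inner_smul_right]
  rw [Finset.sum_congr rfl (fun k _ => by
    rw [orthonormal_iff_ite.mp u.orthonormal j k])]
  simp [Finset.sum_ite_eq, mul_comm, OrthonormalBasis.repr_apply_apply]

private lemma inner_eigen {M : Matrix (Fin m) (Fin m) ℂ}
    {u : OrthonormalBasis (Fin m) ℂ (EuclideanSpace ℂ (Fin m))} {γ : Fin m → ℝ}
    (hu : ∀ j, Matrix.toEuclideanLin M (u j) = (γ j : ℂ) • u j)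
    (x : EuclideanSpace ℂ (Fin m)) :
    RCLike.re (⟪x, Matrix.toEuclideanLin M x⟫_ℂ)
      = ∑ j, γ j * Complex.normSq (u.repr x j) := by
  rw [← u.repr.inner_map_map x (Matrix.toEuclideanLin M x), PiLp.inner_apply]
  rw [Finset.sum_congr rfl (fun k _ => by
    rw [repr_eigen hu x k])]
  simp only [RCLike.inner_apply]
  have : ∀ k : Fin m, (γ k : ℂ) * u.repr x k * (starRingEnd ℂ) (u.repr x k)
      = (γ k : ℂ) * ((Complex.normSq (u.repr x k) : ℝ) : ℂ) := by
    intro k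
    rw [Complex.normSq_eq_conj_mul_self]
    ring
  rw [Finset.sum_congr rfl (fun k _ => this k)]
  rw [← Complex.ofReal_re (∑ j, γ j * Complex.normSq (u.repr x j))]
  congr 1
  push_cast
  rfl

private lemma inner_self_repr {u : OrthonormalBasis (Fin m) ℂ (EuclideanSpace ℂ (Fin m))}
    (x : EuclideanSpace ℂ (Fin m)) :
    RCLike.re (⟪x, x⟫_ℂ) = ∑ j, Complex.normSq (u.repr x j) := by
  rw [← u.repr.inner_map_map x x, PiLp.inner_apply]
  simp only [RCLike.inner_apply, ← Complex.normSq_eq_conj_mul_self, Complex.mul_conj]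
  rw [← Complex.ofReal_re (∑ j, Complex.normSq (u.repr x j))]
  congr 1
  push_cast
  rfl

private lemma repr_zero_of_span {u : OrthonormalBasis (Fin m) ℂ (EuclideanSpace ℂ (Fin m))}
    {S : Set (Fin m)} {x : EuclideanSpace ℂ (Fin m)}
    (hx : x ∈ Submodule.span ℂ (u '' S)) {j : Fin m} (hj : j ∉ S) :
    u.repr x j = 0 := by
  have hker : Submodule.span ℂ (u '' S) ≤
      LinearMap.ker ((innerSL ℂ (u j)).toLinearMap) := by
    rw [Submodule.span_le]
    rintro y ⟨k, hk, rfl⟩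
    have hkj : j ≠ k := fun h => hj (h ▸ hk)
    simp only [SetLike.mem_coe, LinearMap.mem_ker, ContinuousLinearMap.coe_coe, innerSL_apply_apply]
    rw [orthonormal_iff_ite.mp u.orthonormal j k, if_neg hkj]
  have := hker hx
  rw [LinearMap.mem_ker] at this
  rw [OrthonormalBasis.repr_apply_apply]
  simpa using this

private lemma rayleigh_le_of_span {M : Matrix (Fin m) (Fin m) ℂ}
    {u : OrthonormalBasis (Fin m) ℂ (EuclideanSpace ℂ (Fin m))} {γ : Fin m → ℝ}
    (hu : ∀ j, Matrix.toEuclideanLin M (u j) = (γ j : ℂ) • u j)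
    {S : Set (Fin m)} {c : ℝ} (hc : ∀ j ∈ S, c ≤ γ j)
    {x : EuclideanSpace ℂ (Fin m)} (hx : x ∈ Submodule.span ℂ (u '' S)) :
    c * RCLike.re (⟪x, x⟫_ℂ) ≤ RCLike.re (⟪x, Matrix.toEuclideanLin M x⟫_ℂ) := by
  rw [inner_eigen hu x, inner_self_repr (u := u) x, Finset.mul_sum]
  refine Finset.sum_le_sum fun j _ => ?_
  by_cases hj : j ∈ S
  · exact mul_le_mul_of_nonneg_right (hc j hj) (Complex.normSq_nonneg _)
  · rw [repr_zero_of_span hx hj]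
    simp

private lemma rayleigh_ge_of_span {M : Matrix (Fin m) (Fin m) ℂ}
    {u : OrthonormalBasis (Fin m) ℂ (EuclideanSpace ℂ (Fin m))} {γ : Fin m → ℝ}
    (hu : ∀ j, Matrix.toEuclideanLin M (u j) = (γ j : ℂ) • u j)
    {S : Set (Fin m)} {c : ℝ} (hc : ∀ j ∈ S, γ j ≤ c)
    {x : EuclideanSpace ℂ (Fin m)} (hx : x ∈ Submodule.span ℂ (u '' S)) :
    RCLike.re (⟪x, Matrix.toEuclideanLin M x⟫_ℂ) ≤ c * RCLike.re (⟪x, x⟫_ℂ) := by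
  rw [inner_eigen hu x, inner_self_repr (u := u) x, Finset.mul_sum]
  refine Finset.sum_le_sum fun j _ => ?_
  by_cases hj : j ∈ S
  · exact mul_le_mul_of_nonneg_right (hc j hj) (Complex.normSq_nonneg _)
  · rw [repr_zero_of_span hx hj]
    simp

private lemma finrank_span_onb {u : OrthonormalBasis (Fin m) ℂ (EuclideanSpace ℂ (Fin m))}
    (S : Set (Fin m)) [Fintype S] :
    finrank ℂ (Submodule.span ℂ (u '' S)) = Fintype.card S := by
  have himg : ⇑u '' S = Set.range (⇑u ∘ (Subtype.val : S → Fin m)) := by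
    rw [Set.image_eq_range]; rfl
  rw [himg, finrank_span_eq_card
    ((u.orthonormal.comp _ Subtype.val_injective).linearIndependent)]

/-- Weyl monotonicity: if `B - A` is PSD and `u`, `w` are eigenbases of `A`, `B` with
antitone eigenvalue functions `α`, `β`, then `α ≤ β` pointwise. -/
private lemma weyl {A B : Matrix (Fin m) (Fin m) ℂ} (hAB : (B - A).PosSemidef)
    {α β : Fin m → ℝ} (hα : Antitone α) (hβ : Antitone β)
    {u w : OrthonormalBasis (Fin m) ℂ (EuclideanSpace ℂ (Fin m))}
    (hu : ∀ j, Matrix.toEuclideanLin A (u j) = (α j : ℂ) • u j)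
    (hw : ∀ j, Matrix.toEuclideanLin B (w j) = (β j : ℂ) • w j)
    (i : Fin m) : α i ≤ β i := by
  classical
  set V := Submodule.span ℂ (u '' {j | j ≤ i}) with hV
  set W := Submodule.span ℂ (w '' {j | i ≤ j}) with hW
  -- dimension count
  have hdV : finrank ℂ V = i.1 + 1 := by
    rw [hV, finrank_span_onb]
    exact card_le_fin i
  have hdW : finrank ℂ W = m - i.1 := by
    rw [hW, finrank_span_onb]
    exact card_ge_fin i
  have hinter : 0 < finrank ℂ ↥(V ⊓ W) := by
    have h1 := Submodule.finrank_sup_add_finrank_inf_eq V W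
    have h2 : finrank ℂ ↥(V ⊔ W) ≤ m := by
      have := Submodule.finrank_le (V ⊔ W)
      rwa [finrank_euclideanSpace, Fintype.card_fin] at this
    have := i.2
    omega
  obtain ⟨x, hxVW, hx0⟩ : ∃ x, x ∈ V ⊓ W ∧ x ≠ 0 := by
    rw [finrank_pos_iff] at hinter
    obtain ⟨⟨x, hx⟩, h0⟩ := exists_ne (0 : ↥(V ⊓ W))
    exact ⟨x, hx, fun h => h0 (Subtype.ext h)⟩
  have hxV : x ∈ V := hxVW.1
  have hxW : x ∈ W := hxVW.2
  have hn : 0 < RCLike.re (⟪x, x⟫_ℂ) := by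
    rw [inner_self_eq_norm_mul_norm]
    have := norm_pos_iff.mpr hx0
    exact mul_pos this this
  have hlow : α i * RCLike.re (⟪x, x⟫_ℂ) ≤ RCLike.re (⟪x, Matrix.toEuclideanLin A x⟫_ℂ) :=
    rayleigh_le_of_span hu (fun j hj => hα hj) hxV
  have hhigh : RCLike.re (⟪x, Matrix.toEuclideanLin B x⟫_ℂ) ≤ β i * RCLike.re (⟪x, x⟫_ℂ) :=
    rayleigh_ge_of_span hw (fun j hj => hβ hj) hxW
  have hmid : RCLike.re (⟪x, Matrix.toEuclideanLin A x⟫_ℂ)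
      ≤ RCLike.re (⟪x, Matrix.toEuclideanLin B x⟫_ℂ) := by
    have hpsd := hAB.dotProduct_mulVec_nonneg ((WithLp.equiv 2 _) x)
    have hinner : ⟪x, Matrix.toEuclideanLin (B - A) x⟫_ℂ
        = star ((WithLp.equiv 2 _) x) ⬝ᵥ ((B - A) *ᵥ (WithLp.equiv 2 _) x) := by
      rw [EuclideanSpace.inner_eq_star_dotProduct, Matrix.toEuclideanLin_apply,
        dotProduct_comm]
      rfl
    have h0 : 0 ≤ RCLike.re (⟪x, Matrix.toEuclideanLin (B - A) x⟫_ℂ) := by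
      rw [hinner]
      exact (Complex.le_def.mp hpsd).1
    rw [map_sub] at h0
    rw [LinearMap.sub_apply, inner_sub_right] at h0
    rw [map_sub] at h0
    linarith
  exact le_of_mul_le_mul_right (le_trans hlow (le_trans hmid hhigh)) hn

private lemma eigenspace_eq_span {M : Matrix (Fin m) (Fin m) ℂ}
    {u : OrthonormalBasis (Fin m) ℂ (EuclideanSpace ℂ (Fin m))} {γ : Fin m → ℝ}
    (hu : ∀ j, Matrix.toEuclideanLin M (u j) = (γ j : ℂ) • u j) (t : ℝ) :
    Module.End.eigenspace (Matrix.toEuclideanLin M) (t : ℂ)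
      = Submodule.span ℂ (u '' {j | γ j = t}) := by
  classical
  apply le_antisymm
  · intro x hx
    rw [Module.End.mem_eigenspace_iff] at hx
    have hcoef : ∀ j : Fin m, γ j ≠ t → u.repr x j = 0 := by
      intro j hj
      have h1 := repr_eigen hu x j
      rw [hx, _root_.map_smul] at h1
      by_contra hne
      apply hj
      have h2 : (t : ℂ) * u.repr x j = (γ j : ℂ) * u.repr x j := by
        simpa using h1
      have h3 := mul_right_cancel₀ hne h2
      exact Complex.ofReal_injective h3.symm
    have hsum : x = ∑ k ∈ Finset.univ.filter (fun k => γ k = t), u.repr x k • u k := by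
      rw [Finset.sum_filter]
      conv_lhs => rw [← u.sum_repr x]
      refine Finset.sum_congr rfl fun k _ => ?_
      by_cases hk : γ k = t
      · rw [if_pos hk]
      · rw [if_neg hk, hcoef k hk, zero_smul]
    rw [hsum]
    refine Submodule.sum_smul_mem _ _ fun k hk => ?_
    exact Submodule.subset_span ⟨k, (Finset.mem_filter.mp hk).2, rfl⟩
  · rw [Submodule.span_le]
    rintro y ⟨j, hj, rfl⟩
    rw [SetLike.mem_coe, Module.End.mem_eigenspace_iff, hu j]
    rw [Set.mem_setOf_eq] at hj
    rw [hj]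

private lemma card_filter_eq_finrank_eigenspace {M : Matrix (Fin m) (Fin m) ℂ}
    {u : OrthonormalBasis (Fin m) ℂ (EuclideanSpace ℂ (Fin m))} {γ : Fin m → ℝ}
    (hu : ∀ j, Matrix.toEuclideanLin M (u j) = (γ j : ℂ) • u j) (t : ℝ) :
    (Finset.univ.filter (fun j => γ j = t)).card
      = finrank ℂ (Module.End.eigenspace (Matrix.toEuclideanLin M) (t : ℂ)) := by
  classical
  rw [eigenspace_eq_span hu t, finrank_span_onb, Fintype.card_subtype]
  rfl

private lemma finrank_eigenspace_le {m1 m2 : ℕ} (X : Matrix (Fin m1) (Fin m2) ℂ)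
    (Y : Matrix (Fin m2) (Fin m1) ℂ) {t : ℂ} (ht : t ≠ 0) :
    finrank ℂ (Module.End.eigenspace (Matrix.toEuclideanLin (X * Y)) t)
      ≤ finrank ℂ (Module.End.eigenspace (Matrix.toEuclideanLin (Y * X)) t) := by
  classical
  set p := Module.End.eigenspace (Matrix.toEuclideanLin (X * Y)) t with hp
  set q := Module.End.eigenspace (Matrix.toEuclideanLin (Y * X)) t with hq
  have hmaps : ∀ x ∈ p, Matrix.toEuclideanLin Y x ∈ q := by
    intro x hx
    rw [hp, Module.End.mem_eigenspace_iff] at hx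
    rw [hq, Module.End.mem_eigenspace_iff]
    have hx' : (X * Y) *ᵥ WithLp.ofLp x = t • WithLp.ofLp x := by
      have := congrArg (WithLp.equiv 2 (Fin m1 → ℂ)) hx
      exact this
    rw [Matrix.toEuclideanLin_apply, Matrix.toEuclideanLin_apply, WithLp.ofLp_toLp]
    rw [mulVec_mulVec, Matrix.mul_assoc, ← mulVec_mulVec, hx', mulVec_smul]
    rw [WithLp.toLp_smul]
  have hinj : Function.Injective ((Matrix.toEuclideanLin Y).restrict hmaps) := by
    rw [← LinearMap.ker_eq_bot, LinearMap.ker_eq_bot']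
    rintro ⟨x, hx⟩ h0
    have h0' : Matrix.toEuclideanLin Y x = 0 := congrArg Subtype.val h0
    rw [hp, Module.End.mem_eigenspace_iff] at hx
    have hYx : Y *ᵥ WithLp.ofLp x = 0 := by
      have := congrArg (WithLp.equiv 2 (Fin m2 → ℂ)) h0'
      exact this
    have hXYx : Matrix.toEuclideanLin (X * Y) x = 0 := by
      rw [Matrix.toEuclideanLin_apply, ← mulVec_mulVec, hYx, mulVec_zero, WithLp.toLp_zero]
    rw [hx] at hXYx
    have : x = 0 := by
      have := smul_eq_zero.mp hXYx
      tauto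
    exact Subtype.ext this
  exact LinearMap.finrank_le_finrank_of_injective hinj

private lemma finrank_eigenspace_mul_comm {m1 m2 : ℕ} (X : Matrix (Fin m1) (Fin m2) ℂ)
    (Y : Matrix (Fin m2) (Fin m1) ℂ) {t : ℂ} (ht : t ≠ 0) :
    finrank ℂ (Module.End.eigenspace (Matrix.toEuclideanLin (X * Y)) t)
      = finrank ℂ (Module.End.eigenspace (Matrix.toEuclideanLin (Y * X)) t) :=
  le_antisymm (finrank_eigenspace_le X Y ht) (finrank_eigenspace_le Y X ht)

private lemma count_gt_eq {n1 n2 : ℕ} {α : Fin n1 → ℝ} {β : Fin n2 → ℝ}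
    (hc : ∀ t : ℝ, t ≠ 0 →
      #(Finset.univ.filter (fun i => α i = t)) = #(Finset.univ.filter (fun j => β j = t)))
    {t : ℝ} (ht : 0 ≤ t) :
    #(Finset.univ.filter (fun i => t < α i)) = #(Finset.univ.filter (fun j => t < β j)) := by
  classical
  have key : ∀ {n : ℕ} (γ : Fin n → ℝ),
      #(Finset.univ.filter (fun i => t < γ i))
        = ∑ v ∈ (Finset.univ.image γ).filter (fun v => t < v),
            #(Finset.univ.filter (fun i => γ i = v)) := by
    intro n γ
    rw [Finset.card_eq_sum_card_fiberwise (f := γ)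
      (t := (Finset.univ.image γ).filter (fun v => t < v))
      (fun x hx => by
        rw [Finset.mem_coe, Finset.mem_filter] at hx ⊢
        exact ⟨Finset.mem_image_of_mem _ (Finset.mem_univ x), hx.2⟩)]
    refine Finset.sum_congr rfl fun v hv => ?_
    rw [Finset.mem_filter] at hv
    congr 1
    rw [Finset.filter_filter]
    apply Finset.filter_congr
    intro x _
    constructor
    · rintro ⟨_, h⟩; exact h
    · intro h; exact ⟨h ▸ hv.2, h⟩
  have hsets : (Finset.univ.image α).filter (fun v => t < v)
      = (Finset.univ.image β).filter (fun v => t < v) := by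
    ext v
    simp only [Finset.mem_filter, Finset.mem_image]
    constructor
    · rintro ⟨⟨i, _, rfl⟩, hv⟩
      refine ⟨?_, hv⟩
      have hpos : 0 < #(Finset.univ.filter (fun i' => α i' = α i)) :=
        Finset.card_pos.mpr ⟨i, Finset.mem_filter.mpr ⟨Finset.mem_univ i, rfl⟩⟩
      rw [hc _ (by linarith)] at hpos
      obtain ⟨j, hj⟩ := Finset.card_pos.mp hpos
      exact ⟨j, Finset.mem_univ j, (Finset.mem_filter.mp hj).2⟩
    · rintro ⟨⟨j, _, rfl⟩, hv⟩
      refine ⟨?_, hv⟩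
      have hpos : 0 < #(Finset.univ.filter (fun j' => β j' = β j)) :=
        Finset.card_pos.mpr ⟨j, Finset.mem_filter.mpr ⟨Finset.mem_univ j, rfl⟩⟩
      rw [← hc _ (by linarith)] at hpos
      obtain ⟨i, hi⟩ := Finset.card_pos.mp hpos
      exact ⟨i, Finset.mem_univ i, (Finset.mem_filter.mp hi).2⟩
  rw [key α, key β, hsets]
  refine Finset.sum_congr rfl fun v hv => ?_
  rw [Finset.mem_filter] at hv
  exact hc v (by linarith)

private lemma filter_le_card {n : ℕ} (i : Fin n) :
    #(Finset.univ.filter (fun j => j ≤ i)) = i.1 + 1 := by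
  classical
  rw [← Fintype.card_subtype, card_le_fin]

private lemma filter_lt_card {n : ℕ} (i : Fin n) :
    #(Finset.univ.filter (fun j => j < i)) = i.1 := by
  classical
  rw [← Fintype.card_subtype, card_lt_fin]

private lemma antitone_lt_count {n : ℕ} {α : Fin n → ℝ} (hα : Antitone α) {t : ℝ} (i : Fin n) :
    t < α i ↔ i.1 < #(Finset.univ.filter (fun j => t < α j)) := by
  classical
  constructor
  · intro h
    have hsub : Finset.univ.filter (fun j => j ≤ i) ⊆ Finset.univ.filter (fun j => t < α j) := by
      intro j hj
      rw [Finset.mem_filter] at hj ⊢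
      exact ⟨hj.1, lt_of_lt_of_le h (hα hj.2)⟩
    have := Finset.card_le_card hsub
    rw [filter_le_card] at this
    omega
  · intro h
    by_contra hle
    push_neg at hle
    have hsub : Finset.univ.filter (fun j => t < α j) ⊆ Finset.univ.filter (fun j => j < i) := by
      intro j hj
      rw [Finset.mem_filter] at hj ⊢
      refine ⟨hj.1, ?_⟩
      by_contra hji
      push_neg at hji
      exact absurd (lt_of_lt_of_le hj.2 (hα hji)) (not_lt.mpr hle)
    have := Finset.card_le_card hsub
    rw [filter_lt_card] at this
    omega

private lemma antitone_pair_eq {n1 n2 : ℕ} {α : Fin n1 → ℝ} {β : Fin n2 → ℝ}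
    (hα : Antitone α) (hβ : Antitone β) (hα0 : ∀ i, 0 ≤ α i) (hβ0 : ∀ j, 0 ≤ β j)
    (hc : ∀ t : ℝ, t ≠ 0 →
      #(Finset.univ.filter (fun i => α i = t)) = #(Finset.univ.filter (fun j => β j = t))) :
    (∀ (k : ℕ) (hk1 : k < n1) (hk2 : k < n2), α ⟨k, hk1⟩ = β ⟨k, hk2⟩)
      ∧ (∀ j : Fin n1, n2 ≤ j.1 → α j = 0) := by
  constructor
  · intro k hk1 hk2
    by_contra hne
    rcases lt_or_gt_of_ne hne with hlt | hgt
    · -- α < β at k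
      set t := (α ⟨k, hk1⟩ + β ⟨k, hk2⟩) / 2 with hts
      have h1 : α ⟨k, hk1⟩ < t := by rw [hts]; linarith
      have h2 : t < β ⟨k, hk2⟩ := by rw [hts]; linarith
      have ht0 : 0 ≤ t := le_of_lt (lt_of_le_of_lt (hα0 _) h1)
      have hb := (antitone_lt_count hβ ⟨k, hk2⟩).mp h2
      rw [← count_gt_eq hc ht0] at hb
      have := (antitone_lt_count hα ⟨k, hk1⟩).mpr hb
      linarith
    · set t := (α ⟨k, hk1⟩ + β ⟨k, hk2⟩) / 2 with hts
      have h1 : β ⟨k, hk2⟩ < t := by rw [hts]; linarith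
      have h2 : t < α ⟨k, hk1⟩ := by rw [hts]; linarith
      have ht0 : 0 ≤ t := le_of_lt (lt_of_le_of_lt (hβ0 _) h1)
      have hb := (antitone_lt_count hα ⟨k, hk1⟩).mp h2
      rw [count_gt_eq hc ht0] at hb
      have := (antitone_lt_count hβ ⟨k, hk2⟩).mpr hb
      linarith
  · intro j hj
    refine le_antisymm ?_ (hα0 j)
    by_contra hpos
    push_neg at hpos
    set t := α j / 2 with hts
    have h1 : t < α j := by rw [hts]; linarith
    have ht0 : 0 ≤ t := by rw [hts]; linarith
    have hb := (antitone_lt_count hα j).mp h1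
    rw [count_gt_eq hc ht0] at hb
    have hle : #(Finset.univ.filter (fun j' => t < β j')) ≤ n2 := by
      have := Finset.card_filter_le (Finset.univ : Finset (Fin n2)) (fun j' => t < β j')
      simpa using this
    omega

private lemma trace2_posSemidef {n1 n2 : ℕ} {A : Matrix (Fin n1 × Fin n2) (Fin n1 × Fin n2) ℂ}
    (hA : A.PosSemidef) : (trace2 A).PosSemidef := by
  classical
  refine PosSemidef.of_dotProduct_mulVec_nonneg ?_ ?_
  · ext i j
    simp only [trace2, conjTranspose_apply, Matrix.of_apply, star_sum]
    refine Finset.sum_congr rfl fun k _ => ?_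
    rw [← conjTranspose_apply, hA.1]
  · intro y
    have hsum : star y ⬝ᵥ (trace2 A *ᵥ y) = ∑ k : Fin n2,
        star (fun q : Fin n1 × Fin n2 => if q.2 = k then y q.1 else 0) ⬝ᵥ
          (A *ᵥ fun q : Fin n1 × Fin n2 => if q.2 = k then y q.1 else 0) := by
      have sic : ∀ (c : Prop) [Decidable c] (a b : ℂ),
          star (if c then a else b) = if c then star a else star b := by
        intro c _ a b; split <;> rfl
      simp only [dotProduct, mulVec, trace2, Matrix.of_apply, Pi.star_apply, sic, star_zero,
        Fintype.sum_prod_type, mul_ite, ite_mul, zero_mul, mul_zero, Finset.sum_ite_eq',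
        Finset.mem_univ, if_true, Finset.mul_sum, Finset.sum_mul, Finset.sum_ite_irrel,
        Finset.sum_const_zero]
      trans ∑ i : Fin n1, ∑ k : Fin n2, ∑ j : Fin n1, star (y i) * (A (i,k) (j,k) * y j)
      · exact Finset.sum_congr rfl fun i _ => Finset.sum_comm
      exact Finset.sum_comm
    rw [hsum]
    exact Finset.sum_nonneg fun k _ => hA.dotProduct_mulVec_nonneg _

private lemma trace1_posSemidef {n1 n2 : ℕ} {A : Matrix (Fin n1 × Fin n2) (Fin n1 × Fin n2) ℂ}
    (hA : A.PosSemidef) : (trace1 A).PosSemidef := by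
  classical
  refine PosSemidef.of_dotProduct_mulVec_nonneg ?_ ?_
  · ext i j
    simp only [trace1, conjTranspose_apply, Matrix.of_apply, star_sum]
    refine Finset.sum_congr rfl fun k _ => ?_
    rw [← conjTranspose_apply, hA.1]
  · intro y
    have hsum : star y ⬝ᵥ (trace1 A *ᵥ y) = ∑ k : Fin n1,
        star (fun q : Fin n1 × Fin n2 => if q.1 = k then y q.2 else 0) ⬝ᵥ
          (A *ᵥ fun q : Fin n1 × Fin n2 => if q.1 = k then y q.2 else 0) := by
      have sic : ∀ (c : Prop) [Decidable c] (a b : ℂ),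
          star (if c then a else b) = if c then star a else star b := by
        intro c _ a b; split <;> rfl
      simp only [dotProduct, mulVec, trace1, Matrix.of_apply, Pi.star_apply, sic, star_zero,
        Fintype.sum_prod_type, mul_ite, ite_mul, zero_mul, mul_zero, Finset.sum_ite_eq',
        Finset.mem_univ, if_true, Finset.mul_sum, Finset.sum_mul, Finset.sum_ite_irrel,
        Finset.sum_const_zero]
      trans ∑ i : Fin n2, ∑ k : Fin n1, ∑ j : Fin n2, star (y i) * (A (k,i) (k,j) * y j)
      · exact Finset.sum_congr rfl fun i _ => Finset.sum_comm
      exact Finset.sum_comm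
    rw [hsum]
    exact Finset.sum_nonneg fun k _ => hA.dotProduct_mulVec_nonneg _

private lemma trace2_sub_smul {n1 n2 : ℕ}
    (A B : Matrix (Fin n1 × Fin n2) (Fin n1 × Fin n2) ℂ) (c : ℂ) :
    trace2 (A - c • B) = trace2 A - c • trace2 B := by
  ext i j
  simp [trace2, Finset.sum_sub_distrib, Finset.mul_sum]

private lemma trace1_sub_smul {n1 n2 : ℕ}
    (A B : Matrix (Fin n1 × Fin n2) (Fin n1 × Fin n2) ℂ) (c : ℂ) :
    trace1 (A - c • B) = trace1 A - c • trace1 B := by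
  ext i j
  simp [trace1, Finset.sum_sub_distrib, Finset.mul_sum]

private lemma toEuclideanLin_eigen {ι : Type*} [Fintype ι] [DecidableEq ι]
    {M : Matrix ι ι ℂ} {y : EuclideanSpace ℂ ι} {t : ℝ}
    (h : M *ᵥ (WithLp.equiv 2 _) y = t • (WithLp.equiv 2 _) y) :
    Matrix.toEuclideanLin M y = (t : ℂ) • y := by
  have h' : M *ᵥ WithLp.ofLp y = t • WithLp.ofLp y := h
  rw [Matrix.toEuclideanLin_apply, h', WithLp.toLp_smul, WithLp.toLp_ofLp]
  exact (RCLike.real_smul_eq_coe_smul (K := ℂ) t y).symm ▸ rfl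

private lemma herm_transpose_mulVec {k : ℕ} {N : Matrix (Fin k) (Fin k) ℂ}
    (hN : N.IsHermitian) (y : Fin k → ℂ) :
    Nᵀ *ᵥ star y = star (N *ᵥ y) := by
  funext i
  simp only [mulVec, dotProduct, transpose_apply, Pi.star_apply, star_sum, star_mul']
  refine Finset.sum_congr rfl fun j _ => ?_
  have : star (N i j) = N j i := congrFun (congrFun hN j) i
  rw [this, mul_comm]

private lemma exists_transpose_eigenbasis {k : ℕ} {N : Matrix (Fin k) (Fin k) ℂ}
    (hN : N.IsHermitian) (g : Equiv.Perm (Fin k)) (hk : 0 < k) :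
    ∃ w : OrthonormalBasis (Fin k) ℂ (EuclideanSpace ℂ (Fin k)),
      ∀ j, Matrix.toEuclideanLin Nᵀ (w j)
        = ((hN.eigenvalues (g j) : ℝ) : ℂ) • w j := by
  classical
  set v : Fin k → EuclideanSpace ℂ (Fin k) := fun j =>
    (WithLp.equiv 2 _).symm (star ((WithLp.equiv 2 _) (hN.eigenvectorBasis (g j)))) with hv
  have hon : Orthonormal ℂ v := by
    rw [orthonormal_iff_ite]
    intro i j
    rw [EuclideanSpace.inner_eq_star_dotProduct]
    rw [hv]
    simp only [WithLp.equiv_symm_apply, WithLp.ofLp_toLp, star_star]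
    have : star ((WithLp.equiv 2 (Fin k → ℂ)) (hN.eigenvectorBasis (g j))) ⬝ᵥ
        (WithLp.equiv 2 (Fin k → ℂ)) (hN.eigenvectorBasis (g i))
        = star (WithLp.ofLp (hN.eigenvectorBasis (g j)) ⬝ᵥ
            star (WithLp.ofLp (hN.eigenvectorBasis (g i)))) := by
      simp only [dotProduct, star_sum, star_mul', Pi.star_apply, star_star, WithLp.equiv_apply]
    rw [this, ← EuclideanSpace.inner_eq_star_dotProduct,
      orthonormal_iff_ite.mp (hN.eigenvectorBasis).orthonormal]
    by_cases hij : i = j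
    · subst hij; simp
    · rw [if_neg (fun h => hij (g.injective h)), if_neg hij, star_zero]
  have hspan : ⊤ ≤ Submodule.span ℂ (Set.range v) := by
    haveI : Nonempty (Fin k) := ⟨⟨0, hk⟩⟩
    rw [hon.linearIndependent.span_eq_top_of_card_eq_finrank
      (by rw [Fintype.card_fin, finrank_euclideanSpace, Fintype.card_fin])]
  refine ⟨OrthonormalBasis.mk hon hspan, fun j => ?_⟩
  have hcoe : (OrthonormalBasis.mk hon hspan) j = v j := by
    rw [OrthonormalBasis.coe_mk]
  rw [hcoe]
  apply toEuclideanLin_eigen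
  rw [hv]
  simp only [Equiv.apply_symm_apply]
  rw [herm_transpose_mulVec hN, WithLp.equiv_apply, hN.mulVec_eigenvectorBasis]
  funext i
  simp [Pi.smul_apply, star_smul]

private lemma trace_eq_sum_eigenvalues {k : ℕ} {M : Matrix (Fin k) (Fin k) ℂ}
    (hM : M.IsHermitian) :
    M.trace = ((∑ j, hM.eigenvalues j : ℝ) : ℂ) := by
  conv_lhs => rw [hM.spectral_theorem, Unitary.conjStarAlgAut_apply]
  rw [Matrix.trace_mul_cycle]
  rw [show (star (hM.eigenvectorUnitary : Matrix (Fin k) (Fin k) ℂ)) *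
      (hM.eigenvectorUnitary : Matrix (Fin k) (Fin k) ℂ) = 1 from Unitary.coe_star_mul_self _]
  rw [Matrix.one_mul, Matrix.trace_diagonal]
  push_cast
  rfl

private lemma sub_smul_proj_posSemidef {ι : Type*} [Fintype ι] [DecidableEq ι]
    {σ : Matrix ι ι ℂ} (hσ : σ.PosSemidef) (p : ι) :
    (σ - (hσ.1.eigenvalues p : ℂ) •
      Matrix.vecMulVec ((WithLp.equiv 2 _) (hσ.1.eigenvectorBasis p))
        (star ((WithLp.equiv 2 _) (hσ.1.eigenvectorBasis p)))).PosSemidef := by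
  classical
  set U := (hσ.1.eigenvectorUnitary : Matrix ι ι ℂ) with hU
  set d : ι → ℂ := fun k => if k = p then 0 else (hσ.1.eigenvalues k : ℂ) with hd
  have hdpsd : (Matrix.diagonal d).PosSemidef := by
    rw [posSemidef_diagonal_iff]
    intro k
    rw [hd]
    by_cases hk : k = p
    · simp [hk]
    · simp only [if_neg hk]
      rw [show ((0 : ℂ) ≤ (hσ.1.eigenvalues k : ℂ)) ↔ (0 : ℝ) ≤ hσ.1.eigenvalues k from by
        rw [Complex.le_def]; simp]
      exact hσ.eigenvalues_nonneg k
  have key : σ - (hσ.1.eigenvalues p : ℂ) •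
      Matrix.vecMulVec ((WithLp.equiv 2 _) (hσ.1.eigenvectorBasis p))
        (star ((WithLp.equiv 2 _) (hσ.1.eigenvectorBasis p)))
      = U * Matrix.diagonal d * Uᴴ := by
    have hproj : (hσ.1.eigenvalues p : ℂ) •
        Matrix.vecMulVec ((WithLp.equiv 2 _) (hσ.1.eigenvectorBasis p))
          (star ((WithLp.equiv 2 _) (hσ.1.eigenvectorBasis p)))
        = U * Matrix.diagonal (fun k => if k = p then (hσ.1.eigenvalues p : ℂ) else 0) * Uᴴ := by
      ext i j
      rw [Matrix.mul_apply]
      simp only [Matrix.mul_diagonal, conjTranspose_apply, Matrix.smul_apply, vecMulVec_apply,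
        Pi.star_apply, ite_mul, zero_mul, mul_ite, mul_zero, smul_eq_mul]
      rw [Finset.sum_ite_eq' Finset.univ p
        (fun k => U i k * (hσ.1.eigenvalues p : ℂ) * star (U j k))]
      simp only [Finset.mem_univ, if_true]
      have h1 : U i p = (WithLp.equiv 2 _) (hσ.1.eigenvectorBasis p) i := rfl
      have h2 : U j p = (WithLp.equiv 2 _) (hσ.1.eigenvectorBasis p) j := rfl
      rw [h1, h2]
      ring
    have hsplit : Matrix.diagonal (RCLike.ofReal ∘ hσ.1.eigenvalues)
        = Matrix.diagonal d
          + Matrix.diagonal (fun k => if k = p then (hσ.1.eigenvalues p : ℂ) else 0) := by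
      ext a b
      by_cases hab : a = b
      · subst hab
        simp only [Matrix.diagonal_apply_eq, Matrix.add_apply, Function.comp_apply, hd]
        by_cases hap : a = p
        · subst hap; simp
        · simp [hap]
      · simp [Matrix.diagonal_apply_ne _ hab]
    have key2 : U * Matrix.diagonal d * Uᴴ + (hσ.1.eigenvalues p : ℂ) •
        Matrix.vecMulVec ((WithLp.equiv 2 _) (hσ.1.eigenvectorBasis p))
          (star ((WithLp.equiv 2 _) (hσ.1.eigenvectorBasis p))) = σ := by
      rw [hproj, ← Matrix.add_mul, ← Matrix.mul_add, ← hsplit]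
      exact hσ.1.spectral_theorem.symm
    rw [sub_eq_iff_eq_add]
    exact key2.symm
  rw [key]
  exact hdpsd.mul_mul_conjTranspose_same U

/-- Upper bound on the largest eigenvalue over `S(ρ1, ρ2)`: if `a`, `b` are the eigenvalues
of `ρ1`, `ρ2` in descending order, then every eigenvalue of every `σ ∈ S(ρ1, ρ2)` is at most
`Σ_{i=1}^{min(n1,n2)} min{a_i, b_i}`. -/
theorem stmt9 {n1 n2 : ℕ}
    (ρ1 : Matrix (Fin n1) (Fin n1) ℂ) (ρ2 : Matrix (Fin n2) (Fin n2) ℂ)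
    (hρ1 : ρ1.PosSemidef) (hρ1tr : ρ1.trace = 1)
    (hρ2 : ρ2.PosSemidef) (hρ2tr : ρ2.trace = 1)
    (a : Fin n1 → ℝ) (b : Fin n2 → ℝ) (haA : Antitone a) (hbA : Antitone b)
    (ha : Finset.univ.val.map a = Finset.univ.val.map hρ1.1.eigenvalues)
    (hb : Finset.univ.val.map b = Finset.univ.val.map hρ2.1.eigenvalues) :
    ∀ (σ : Matrix (Fin n1 × Fin n2) (Fin n1 × Fin n2) ℂ) (hσ : σ.PosSemidef),
      σ.trace = 1 → trace2 σ = ρ1 → trace1 σ = ρ2 →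
        ∀ p, hσ.1.eigenvalues p ≤
          ∑ i : Fin (min n1 n2),
            min (a (Fin.castLE (Nat.min_le_left n1 n2) i))
              (b (Fin.castLE (Nat.min_le_right n1 n2) i)) := by
  intro σ hσ htrσ hσρ1 hσρ2 p
  classical
  have hn1 : 0 < n1 := p.1.pos
  have hn2 : 0 < n2 := p.2.pos
  -- the eigenvalue and unit eigenvector
  set lam := hσ.1.eigenvalues p with hlam
  have hlam0 : 0 ≤ lam := hσ.eigenvalues_nonneg p
  set vf : Fin n1 × Fin n2 → ℂ := (WithLp.equiv 2 _) (hσ.1.eigenvectorBasis p) with hvf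
  set V : Matrix (Fin n1) (Fin n2) ℂ := Matrix.of (fun i k => vf (i, k)) with hV
  -- σ minus the weighted eigenprojection is PSD
  have hP : (σ - (lam : ℂ) • Matrix.vecMulVec vf (star vf)).PosSemidef :=
    sub_smul_proj_posSemidef hσ p
  -- partial traces of the projection
  have h_tr2P : trace2 (Matrix.vecMulVec vf (star vf)) = V * Vᴴ := by
    ext i j
    simp only [trace2, Matrix.of_apply, vecMulVec_apply, Pi.star_apply, Matrix.mul_apply,
      conjTranspose_apply, hV]
  have h_tr1P : trace1 (Matrix.vecMulVec vf (star vf)) = (Vᴴ * V)ᵀ := by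
    ext i j
    simp only [trace1, Matrix.of_apply, vecMulVec_apply, Pi.star_apply, Matrix.mul_apply,
      conjTranspose_apply, transpose_apply, hV]
    exact Finset.sum_congr rfl fun k _ => mul_comm _ _
  have hpsd1 : (ρ1 - (lam : ℂ) • (V * Vᴴ)).PosSemidef := by
    have := trace2_posSemidef hP
    rwa [trace2_sub_smul, hσρ1, h_tr2P] at this
  have hpsd2 : (ρ2ᵀ - (lam : ℂ) • (Vᴴ * V)).PosSemidef := by
    have h0 := trace1_posSemidef hP
    rw [trace1_sub_smul, hσρ2, h_tr1P] at h0
    have := h0.transpose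
    rwa [transpose_sub, transpose_smul, transpose_transpose] at this
  -- PSD marginals of the eigenprojection and sorted eigenvalues
  have hM1 : (V * Vᴴ).PosSemidef := posSemidef_self_mul_conjTranspose V
  have hM2 : (Vᴴ * V).PosSemidef := posSemidef_conjTranspose_mul_self V
  obtain ⟨e1, he1⟩ := exists_antitone_comp hM1.1.eigenvalues
  obtain ⟨e2, he2⟩ := exists_antitone_comp hM2.1.eigenvalues
  set α : Fin n1 → ℝ := hM1.1.eigenvalues ∘ e1 with hα
  set β : Fin n2 → ℝ := hM2.1.eigenvalues ∘ e2 with hβ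
  set u : OrthonormalBasis (Fin n1) ℂ (EuclideanSpace ℂ (Fin n1)) :=
    hM1.1.eigenvectorBasis.reindex e1.symm with hudef
  set u2 : OrthonormalBasis (Fin n2) ℂ (EuclideanSpace ℂ (Fin n2)) :=
    hM2.1.eigenvectorBasis.reindex e2.symm with hu2def
  have hu : ∀ j, Matrix.toEuclideanLin (V * Vᴴ) (u j) = ((α j : ℝ) : ℂ) • u j := by
    intro j
    have hb1 : u j = hM1.1.eigenvectorBasis (e1 j) := by
      rw [hudef, OrthonormalBasis.reindex_apply, Equiv.symm_symm]
    rw [hb1]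
    exact toEuclideanLin_eigen (hM1.1.mulVec_eigenvectorBasis (e1 j))
  have hu2 : ∀ j, Matrix.toEuclideanLin (Vᴴ * V) (u2 j) = ((β j : ℝ) : ℂ) • u2 j := by
    intro j
    have hb1 : u2 j = hM2.1.eigenvectorBasis (e2 j) := by
      rw [hu2def, OrthonormalBasis.reindex_apply, Equiv.symm_symm]
    rw [hb1]
    exact toEuclideanLin_eigen (hM2.1.mulVec_eigenvectorBasis (e2 j))
  -- scaled eigenrelations
  have hu' : ∀ j, Matrix.toEuclideanLin ((lam : ℂ) • (V * Vᴴ)) (u j)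
      = ((lam * α j : ℝ) : ℂ) • u j := by
    intro j
    rw [_root_.map_smul, LinearMap.smul_apply, hu j, smul_smul]
    congr 1
    push_cast
    ring
  have hu2' : ∀ j, Matrix.toEuclideanLin ((lam : ℂ) • (Vᴴ * V)) (u2 j)
      = ((lam * β j : ℝ) : ℂ) • u2 j := by
    intro j
    rw [_root_.map_smul, LinearMap.smul_apply, hu2 j, smul_smul]
    congr 1
    push_cast
    ring
  -- sorted eigenbases for ρ1 and ρ2ᵀ
  obtain ⟨g1, hg1⟩ := exists_comp_equiv ha
  have hw1 : ∀ j, Matrix.toEuclideanLin ρ1 ((hρ1.1.eigenvectorBasis.reindex g1.symm) j)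
      = ((a j : ℝ) : ℂ) • (hρ1.1.eigenvectorBasis.reindex g1.symm) j := by
    intro j
    rw [OrthonormalBasis.reindex_apply, Equiv.symm_symm]
    have : a j = hρ1.1.eigenvalues (g1 j) := congrFun hg1 j
    rw [this]
    exact toEuclideanLin_eigen (hρ1.1.mulVec_eigenvectorBasis (g1 j))
  obtain ⟨g2, hg2⟩ := exists_comp_equiv hb
  obtain ⟨w2, hw2⟩ := exists_transpose_eigenbasis hρ2.1 g2 hn2
  have hw2' : ∀ j, Matrix.toEuclideanLin ρ2ᵀ (w2 j) = ((b j : ℝ) : ℂ) • w2 j := by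
    intro j
    rw [hw2 j]
    congr 2
    exact (congrFun hg2 j).symm
  -- Weyl inequalities
  have hweylA : ∀ i, lam * α i ≤ a i := fun i =>
    weyl hpsd1 (fun i j hij => mul_le_mul_of_nonneg_left (he1 hij) hlam0) haA hu' hw1 i
  have hweylB : ∀ i, lam * β i ≤ b i := fun i =>
    weyl hpsd2 (fun i j hij => mul_le_mul_of_nonneg_left (he2 hij) hlam0) hbA hu2' hw2' i
  -- Schmidt: the nonzero spectra of V Vᴴ and Vᴴ V agree
  have hcount : ∀ t : ℝ, t ≠ 0 →
      #(Finset.univ.filter (fun i => α i = t)) = #(Finset.univ.filter (fun j => β j = t)) := by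
    intro t ht
    rw [card_filter_eq_finrank_eigenspace hu t, card_filter_eq_finrank_eigenspace hu2 t]
    exact finrank_eigenspace_mul_comm V Vᴴ (by exact_mod_cast Complex.ofReal_ne_zero.mpr ht)
  obtain ⟨heqαβ, hzero⟩ := antitone_pair_eq he1 he2
    (fun i => hM1.eigenvalues_nonneg _) (fun j => hM2.eigenvalues_nonneg _) hcount
  -- the sorted eigenvalues of V Vᴴ sum to 1
  have hsumα : ∑ j, α j = 1 := by
    have h1 : (V * Vᴴ).trace = ((∑ j, hM1.1.eigenvalues j : ℝ) : ℂ) :=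
      trace_eq_sum_eigenvalues hM1.1
    have h2 : (V * Vᴴ).trace = 1 := by
      have htr : (V * Vᴴ).trace = ∑ q : Fin n1 × Fin n2, star (vf q) * vf q := by
        rw [Matrix.trace, Fintype.sum_prod_type]
        refine Finset.sum_congr rfl fun i _ => ?_
        rw [Matrix.diag_apply, Matrix.mul_apply]
        refine Finset.sum_congr rfl fun k _ => ?_
        rw [conjTranspose_apply, hV]
        simp only [Matrix.of_apply, Pi.star_apply]
        ring
      rw [htr]
      have hinner : (∑ q : Fin n1 × Fin n2, star (vf q) * vf q)
          = ⟪hσ.1.eigenvectorBasis p, hσ.1.eigenvectorBasis p⟫_ℂ := by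
        rw [EuclideanSpace.inner_eq_star_dotProduct, dotProduct_comm]
        rfl
      rw [hinner, inner_self_eq_norm_sq_to_K]
      rw [hσ.1.eigenvectorBasis.orthonormal.1 p]
      norm_num
    rw [h1] at h2
    have h3 : (∑ j, hM1.1.eigenvalues j) = 1 :=
      Complex.ofReal_injective (by rw [h2, Complex.ofReal_one])
    rw [hα]
    rw [show (∑ j, (hM1.1.eigenvalues ∘ e1) j) = ∑ j, hM1.1.eigenvalues j from
      Equiv.sum_comp e1 _]
    exact h3
  -- put everything together
  have hgoal : lam = ∑ j, lam * α j := by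
    rw [← Finset.mul_sum, hsumα, mul_one]
  rw [hlam] at hgoal ⊢
  rw [hgoal]
  have hmin1 : min n1 n2 ≤ n1 := Nat.min_le_left n1 n2
  have hmin2 : min n1 n2 ≤ n2 := Nat.min_le_right n1 n2
  set emb : Fin (min n1 n2) ↪ Fin n1 :=
    ⟨Fin.castLE hmin1, Fin.castLE_injective hmin1⟩ with hemb
  have hsplit : (∑ j, lam * α j) = ∑ j ∈ Finset.univ.map emb, lam * α j := by
    symm
    apply Finset.sum_subset (Finset.subset_univ _)
    intro j _ hj
    have hjge : n2 ≤ j.1 := by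
      by_contra hlt
      push_neg at hlt
      apply hj
      rw [Finset.mem_map]
      refine ⟨⟨j.1, lt_min j.2 hlt⟩, Finset.mem_univ _, ?_⟩
      rw [hemb]
      exact Fin.ext rfl
    rw [hzero j hjge, mul_zero]
  rw [hsplit, Finset.sum_map]
  apply Finset.sum_le_sum
  intro i _
  apply le_min
  · exact hweylA _
  · have hia : α (emb i) = β (Fin.castLE hmin2 ⟨i.1, i.2⟩) := by
      exact heqαβ i.1 (lt_of_lt_of_le i.2 hmin1) (lt_of_lt_of_le i.2 hmin2)
    have : lam * α (emb i) ≤ b (Fin.castLE hmin2 ⟨i.1, i.2⟩) := by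
      rw [hia]
      exact hweylB _
    exact this
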